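/- For any θ₁, θ₂ with 0 < θ₁ < θ₂ < π/2 and any positive reals S₁₂, S₁₃, the function θ ↦ min over ω ∈ (π/2 − θ, π/2] of h_θ(ω), where h_θ(ω) = (1/2)·log( (S₁₂ + S₁₃ + sin²ω − 2cos(ω)√(S₁₂S₁₃)) · sin²θ / ((S₁₃+1)(sin²θ − cos²ω)) ), is non-increasing in θ; i.e., min_{ω∈(π/2−θ₂,π/2]} h_{θ₂}(ω) ≤ min_{ω∈(π/2−θ₁,π/2]} h_{θ₁}(ω). -/
import Mathlib


open Real

/-- The function `h_θ(ω)` from the geometric bound of Wu et al. -/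
noncomputable def hFun (S12 S13 θ ω : ℝ) : ℝ :=
  (1/2) * Real.log ((S12 + S13 + Real.sin ω ^ 2 - 2 * Real.cos ω * Real.sqrt (S12 * S13))
      * Real.sin θ ^ 2 / ((S13 + 1) * (Real.sin θ ^ 2 - Real.cos ω ^ 2)))

lemma A_pos (S12 S13 ω : ℝ) (h12 : 0 < S12) (h13 : 0 < S13) (hc : Real.cos ω ≤ 1)
    (hs : 0 ≤ Real.sin ω) :
    Real.sin ω ^ 2 ≤ S12 + S13 + Real.sin ω ^ 2 - 2 * Real.cos ω * Real.sqrt (S12 * S13) := by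
  have hsq : Real.sqrt (S12 * S13) ^ 2 = S12 * S13 :=
    Real.sq_sqrt (by positivity)
  have hnn : 0 ≤ Real.sqrt (S12 * S13) := Real.sqrt_nonneg _
  nlinarith [sq_nonneg (S12 - S13), sq_nonneg (S12 + S13 - 2 * Real.sqrt (S12 * S13)),
    mul_nonneg hnn (sub_nonneg.mpr hc)]

set_option maxHeartbeats 2000000 in
/-- The function `θ ↦ min_{ω ∈ (π/2−θ, π/2]} h_θ(ω)` is non-increasing in `θ`
on `(0, π/2)`. -/
theorem stmt_6 (S12 S13 θ₁ θ₂ : ℝ) (h12 : 0 < S12) (h13 : 0 < S13)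
    (h1 : 0 < θ₁) (h2 : θ₁ < θ₂) (h3 : θ₂ < Real.pi / 2) :
    sInf ((fun ω => hFun S12 S13 θ₂ ω) '' Set.Ioc (Real.pi / 2 - θ₂) (Real.pi / 2))
      ≤ sInf ((fun ω => hFun S12 S13 θ₁ ω) '' Set.Ioc (Real.pi / 2 - θ₁) (Real.pi / 2)) := by
  have hpi : 0 < Real.pi / 2 := by positivity
  have hθ2 : θ₂ < Real.pi / 2 := h3
  have hsθ2 : 0 < Real.sin θ₂ := Real.sin_pos_of_pos_of_lt_pi (by linarith)
    (by linarith [Real.pi_pos])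
  have hsθ1 : 0 < Real.sin θ₁ := Real.sin_pos_of_pos_of_lt_pi h1
    (by linarith [Real.pi_pos])
  have hs12 : Real.sin θ₁ < Real.sin θ₂ :=
    Real.sin_lt_sin_of_lt_of_le_pi_div_two (by linarith) (by linarith) h2
  have hcθ2 : 0 < Real.cos θ₂ := Real.cos_pos_of_mem_Ioo ⟨by linarith, h3⟩
  -- basic facts for ω in the big interval
  have key : ∀ ω ∈ Set.Ioc (Real.pi / 2 - θ₂) (Real.pi / 2),
      0 ≤ Real.cos ω ∧ Real.cos ω < Real.sin θ₂ ∧ Real.cos θ₂ ≤ Real.sin ω := by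
    intro ω hω
    obtain ⟨hω1, hω2⟩ := hω
    have hc : Real.cos ω = Real.sin (Real.pi / 2 - ω) := (Real.sin_pi_div_two_sub ω).symm
    constructor
    · rw [hc]; exact Real.sin_nonneg_of_nonneg_of_le_pi (by linarith) (by linarith [Real.pi_pos])
    constructor
    · rw [hc]
      exact Real.sin_lt_sin_of_lt_of_le_pi_div_two (by linarith) (by linarith) (by linarith)
    · rw [show Real.cos θ₂ = Real.sin (Real.pi / 2 - θ₂) from (Real.sin_pi_div_two_sub θ₂).symm]
      exact le_of_lt (Real.sin_lt_sin_of_lt_of_le_pi_div_two (by linarith) (by linarith)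
        (by linarith))
  -- positivity of the argument for θ with sin θ > cos ω bounds
  -- lower bound for hFun θ₂ on the big interval
  set m : ℝ := (1/2) * Real.log (Real.cos θ₂ ^ 2 / (S13 + 1)) with hm
  have hbdd : ∀ ω ∈ Set.Ioc (Real.pi / 2 - θ₂) (Real.pi / 2), m ≤ hFun S12 S13 θ₂ ω := by
    intro ω hω
    obtain ⟨hc0, hcs, hsc⟩ := key ω hω
    have hsω : 0 ≤ Real.sin ω := le_trans hcθ2.le hsc
    have hA := A_pos S12 S13 ω h12 h13 (Real.cos_le_one ω) hsω
    have hApos : 0 < S12 + S13 + Real.sin ω ^ 2 - 2 * Real.cos ω * Real.sqrt (S12 * S13) := by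
      nlinarith [sq_nonneg (Real.sin ω), mul_pos hcθ2 hcθ2]
    have hden : 0 < Real.sin θ₂ ^ 2 - Real.cos ω ^ 2 := by nlinarith
    have hden' : (S13 + 1) * (Real.sin θ₂ ^ 2 - Real.cos ω ^ 2) ≤ (S13 + 1) * Real.sin θ₂ ^ 2 := by
      nlinarith [sq_nonneg (Real.cos ω)]
    simp only [hFun, hm]
    gcongr (1/2) * Real.log ?_
    · -- cos θ₂ ^2 / (S13+1) ≤ A * sin θ₂^2 / ((S13+1)(sin θ₂^2 - cos ω^2))
      rw [div_le_div_iff₀ (by positivity) (by positivity)]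
      have hAc : Real.cos θ₂ ^ 2 ≤ S12 + S13 + Real.sin ω ^ 2
          - 2 * Real.cos ω * Real.sqrt (S12 * S13) := by nlinarith
      have step0 : Real.cos θ₂ ^ 2 * ((S13 + 1) * (Real.sin θ₂ ^ 2 - Real.cos ω ^ 2))
          ≤ Real.cos θ₂ ^ 2 * ((S13 + 1) * Real.sin θ₂ ^ 2) :=
        mul_le_mul_of_nonneg_left hden' (sq_nonneg _)
      have step1 : Real.cos θ₂ ^ 2 * ((S13 + 1) * Real.sin θ₂ ^ 2)
          ≤ (S12 + S13 + Real.sin ω ^ 2 - 2 * Real.cos ω * Real.sqrt (S12 * S13))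
            * ((S13 + 1) * Real.sin θ₂ ^ 2) :=
        mul_le_mul_of_nonneg_right hAc (by positivity)
      nlinarith [step0, step1]
  have hBdd : BddBelow ((fun ω => hFun S12 S13 θ₂ ω) '' Set.Ioc (Real.pi / 2 - θ₂)
      (Real.pi / 2)) := by
    refine ⟨m, ?_⟩
    rintro x ⟨ω, hω, rfl⟩
    exact hbdd ω hω
  have hne1 : ((fun ω => hFun S12 S13 θ₁ ω) '' Set.Ioc (Real.pi / 2 - θ₁)
      (Real.pi / 2)).Nonempty := by
    exact ⟨_, ⟨Real.pi / 2, ⟨by linarith, le_refl _⟩, rfl⟩⟩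
  refine le_csInf hne1 ?_
  rintro x ⟨ω, hω, rfl⟩
  have hω2 : ω ∈ Set.Ioc (Real.pi / 2 - θ₂) (Real.pi / 2) := ⟨by linarith [hω.1], hω.2⟩
  refine le_trans (csInf_le hBdd ⟨ω, hω2, rfl⟩) ?_
  -- show hFun θ₂ ω ≤ hFun θ₁ ω
  obtain ⟨hc0, hcs2, hsc⟩ := key ω hω2
  have hcs1 : Real.cos ω < Real.sin θ₁ := by
    rw [show Real.cos ω = Real.sin (Real.pi / 2 - ω) from (Real.sin_pi_div_two_sub ω).symm]
    exact Real.sin_lt_sin_of_lt_of_le_pi_div_two (by linarith [hω.2]) (by linarith)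
      (by linarith [hω.1])
  have hsω : 0 ≤ Real.sin ω := le_trans hcθ2.le hsc
  have hApos : 0 < S12 + S13 + Real.sin ω ^ 2 - 2 * Real.cos ω * Real.sqrt (S12 * S13) := by
    have hA := A_pos S12 S13 ω h12 h13 (Real.cos_le_one ω) hsω
    nlinarith [mul_pos hcθ2 hcθ2]
  have hden1 : 0 < Real.sin θ₁ ^ 2 - Real.cos ω ^ 2 := by nlinarith
  have hden2 : 0 < Real.sin θ₂ ^ 2 - Real.cos ω ^ 2 := by nlinarith
  simp only [hFun]
  gcongr (1/2) * Real.log ?_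
  · rw [div_le_div_iff₀ (by positivity) (by positivity)]
    have hab : Real.sin θ₁ ^ 2 ≤ Real.sin θ₂ ^ 2 := by nlinarith
    have hkey := mul_le_mul_of_nonneg_left hab
      (mul_nonneg (mul_nonneg hApos.le (by positivity : (0:ℝ) ≤ S13 + 1)) (sq_nonneg (Real.cos ω)))
    nlinarith [hkey]
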